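/- Let ν > 0 and for every E > 0 define N(E) = ν·e^{−νπE^{−1/2}}/(1 − e^{−νπE^{−1/2}}) (the Luttinger–Sy limiting integrated density of states), extended by 0 for E ≤ 0. Then for every β > 0 the integral ρ_c = ∫_{(0,∞)} (e^{βE} − 1)^{−1} dN(E) is finite, and N(E) = exp(−νπ·E^{−1/2}·(1 + o(1))) as E ↓ 0. -/

import Mathlib

open MeasureTheory Real Filter
open scoped ENNReal

lemma aux_pow_le_exp (x : ℝ) (hx : 0 ≤ x) (k : ℕ) (hk : k ≠ 0) :
    (x / k) ^ k ≤ Real.exp x := by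
  have hk0 : (0:ℝ) < k := by exact_mod_cast Nat.pos_of_ne_zero hk
  have h1 : x / k ≤ Real.exp (x / k) := by
    have := Real.add_one_le_exp (x / k); linarith
  calc (x / k) ^ k ≤ Real.exp (x / k) ^ k :=
        pow_le_pow_left₀ (div_nonneg hx hk0.le) h1 k
    _ = Real.exp x := by
        rw [← Real.exp_nat_mul]; congr 1; field_simp

lemma aux_exp_sub_one (z : ℝ) (hz : 0 ≤ z) :
    z ^ 8 / (2 * 14 ^ 7) ≤ Real.exp z - 1 := by
  have h1 : z / 2 ≤ Real.exp (z / 2) - 1 := by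
    have := Real.add_one_le_exp (z / 2); linarith
  have h2 : (z / 14) ^ 7 ≤ Real.exp (z / 2) := by
    have := aux_pow_le_exp (z / 2) (by linarith) 7 (by norm_num)
    calc (z / 14) ^ 7 = (z / 2 / 7) ^ 7 := by ring
      _ ≤ Real.exp (z / 2) := this
  have h3 : Real.exp (z / 2) * Real.exp (z / 2) = Real.exp z := by
    rw [← Real.exp_add]; congr 1; ring
  have h4 : (0:ℝ) ≤ (z / 14) ^ 7 := by positivity
  nlinarith [mul_le_mul h1 h2 h4 (by linarith : (0:ℝ) ≤ Real.exp (z/2) - 1)]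

lemma aux_rpow' (E : ℝ) (hE : 0 < E) : E ^ (-(1:ℝ)/2) = (Real.sqrt E)⁻¹ := by
  rw [show (-(1:ℝ)/2) = -(1/2 : ℝ) by norm_num, Real.rpow_neg hE.le, Real.sqrt_eq_rpow]

lemma aux_summable : Summable (fun n : ℕ => ((n:ℝ) + 2) / ((n:ℝ) + 1) ^ 4) := by
  have h : Summable (fun n : ℕ => 2 / ((n:ℝ) + 1) ^ 3) := by
    have h0 : Summable (fun n : ℕ => 1 / ((n:ℝ)) ^ 3) :=
      Real.summable_one_div_nat_pow.mpr (by norm_num)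
    have h1 : Summable (fun n : ℕ => 1 / ((n:ℝ) + 1) ^ 3) := by
      have := (summable_nat_add_iff 1).mpr h0
      refine this.congr fun n => ?_
      push_cast; ring_nf
    refine (h1.mul_left 2).congr fun n => ?_
    ring
  refine Summable.of_nonneg_of_le (fun n => by positivity) (fun n => ?_) h
  have h1 : (0:ℝ) < (n:ℝ) + 1 := by positivity
  rw [div_le_div_iff₀ (by positivity) (by positivity)]
  nlinarith [pow_pos h1 3, sq_nonneg ((n:ℝ)+1)]

lemma aux_N (ν : ℝ) (hν : 0 < ν) (N : ℝ → ℝ)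
    (hN : ∀ E : ℝ, 0 < E →
      N E = ν * exp (-ν * π * E ^ (-(1:ℝ)/2)) / (1 - exp (-ν * π * E ^ (-(1:ℝ)/2))))
    (E : ℝ) (hE : 0 < E) : N E = ν / (Real.exp (ν * π / Real.sqrt E) - 1) := by
  have hs : 0 < Real.sqrt E := Real.sqrt_pos.mpr hE
  set y := ν * π / Real.sqrt E with hydef
  have hy : 0 < y := by positivity
  have harg : -ν * π * E ^ (-(1:ℝ)/2) = -y := by
    rw [aux_rpow' E hE, hydef]; ring
  have h1 : Real.exp (-y) = (Real.exp y)⁻¹ := Real.exp_neg y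
  have h2 : 1 < Real.exp y := Real.one_lt_exp_iff.mpr hy
  have h3 : Real.exp y - 1 ≠ 0 := by linarith
  have h4 : Real.exp y ≠ 0 := Real.exp_ne_zero y
  rw [hN E hE, harg, h1]
  field_simp

lemma aux_N_nonneg (ν : ℝ) (hν : 0 < ν) (N : ℝ → ℝ)
    (hN : ∀ E : ℝ, 0 < E →
      N E = ν * exp (-ν * π * E ^ (-(1:ℝ)/2)) / (1 - exp (-ν * π * E ^ (-(1:ℝ)/2))))
    (E : ℝ) (hE : 0 < E) : 0 ≤ N E := by
  rw [aux_N ν hν N hN E hE]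
  have hs : 0 < Real.sqrt E := Real.sqrt_pos.mpr hE
  have hy : 0 < ν * π / Real.sqrt E := by positivity
  have h2 : 1 < Real.exp (ν * π / Real.sqrt E) := Real.one_lt_exp_iff.mpr hy
  exact div_nonneg hν.le (by linarith)

lemma aux_N_ub1 (ν : ℝ) (hν : 0 < ν) (N : ℝ → ℝ)
    (hN : ∀ E : ℝ, 0 < E →
      N E = ν * exp (-ν * π * E ^ (-(1:ℝ)/2)) / (1 - exp (-ν * π * E ^ (-(1:ℝ)/2))))
    (E : ℝ) (hE : 0 < E) : N E ≤ ν * (2 * 14 ^ 7) * E ^ 4 / (ν * π) ^ 8 := by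
  rw [aux_N ν hν N hN E hE]
  have hs : 0 < Real.sqrt E := Real.sqrt_pos.mpr hE
  have hπ : (0:ℝ) < π := Real.pi_pos
  set y := ν * π / Real.sqrt E with hydef
  have hy : 0 < y := by positivity
  have hlb : y ^ 8 / (2 * 14 ^ 7) ≤ Real.exp y - 1 := aux_exp_sub_one y hy.le
  have hlb0 : (0:ℝ) < y ^ 8 / (2 * 14 ^ 7) := by positivity
  have hy8 : y ^ 8 = (ν * π) ^ 8 / E ^ 4 := by
    rw [hydef, div_pow]
    congr 1
    calc Real.sqrt E ^ 8 = (Real.sqrt E ^ 2) ^ 4 := by ring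
      _ = E ^ 4 := by rw [Real.sq_sqrt hE.le]
  calc ν / (Real.exp y - 1) ≤ ν / (y ^ 8 / (2 * 14 ^ 7)) := by
        apply div_le_div_of_nonneg_left hν.le hlb0 hlb
    _ = ν * (2 * 14 ^ 7) * E ^ 4 / (ν * π) ^ 8 := by
        rw [hy8]
        field_simp

lemma aux_N_ub2 (ν : ℝ) (hν : 0 < ν) (N : ℝ → ℝ)
    (hN : ∀ E : ℝ, 0 < E →
      N E = ν * exp (-ν * π * E ^ (-(1:ℝ)/2)) / (1 - exp (-ν * π * E ^ (-(1:ℝ)/2))))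
    (E : ℝ) (hE : 0 < E) : N E ≤ Real.sqrt E / π := by
  rw [aux_N ν hν N hN E hE]
  have hs : 0 < Real.sqrt E := Real.sqrt_pos.mpr hE
  have hπ : (0:ℝ) < π := Real.pi_pos
  set y := ν * π / Real.sqrt E with hydef
  have hy : 0 < y := by positivity
  have hlb : y ≤ Real.exp y - 1 := by have := Real.add_one_le_exp y; linarith
  calc ν / (Real.exp y - 1) ≤ ν / y := div_le_div_of_nonneg_left hν.le hy hlb
    _ = Real.sqrt E / π := by rw [hydef]; field_simp

theorem stmt_18 (ν β : ℝ) (hν : 0 < ν) (hβ : 0 < β) (N : ℝ → ℝ)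
    (hN : ∀ E : ℝ, 0 < E →
      N E = ν * exp (-ν * π * E ^ (-(1:ℝ)/2)) / (1 - exp (-ν * π * E ^ (-(1:ℝ)/2))))
    (hN0 : ∀ E : ℝ, E ≤ 0 → N E = 0) :
    (∀ m : Measure ℝ,
      (∀ a b : ℝ, a ≤ b → m (Set.Ioc a b) = ENNReal.ofReal (N b - N a)) →
      (∫⁻ E in Set.Ioi (0:ℝ), ENNReal.ofReal (exp (β * E) - 1)⁻¹ ∂m) < ⊤) ∧
    Tendsto (fun E : ℝ => -Real.log (N E) * Real.sqrt E)
      (nhdsWithin 0 (Set.Ioi 0)) (nhds (ν * π)) := by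
  have hπ : (0:ℝ) < π := Real.pi_pos
  constructor
  · intro m hm
    set f : ℝ → ℝ≥0∞ := fun E => ENNReal.ofReal (exp (β * E) - 1)⁻¹ with hf
    set S1 : ℕ → Set ℝ := fun n => Set.Ioc (1/((n:ℝ)+2)) (1/((n:ℝ)+1)) with hS1
    set S2 : ℕ → Set ℝ := fun n => Set.Ioc ((n:ℝ)+1) ((n:ℝ)+2) with hS2
    have cover : Set.Ioi (0:ℝ) ⊆ (⋃ n : ℕ, S1 n) ∪ (⋃ n : ℕ, S2 n) := by
      intro x hx
      have hx0 : (0:ℝ) < x := hx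
      by_cases hx1 : x ≤ 1
      · left
        rw [Set.mem_iUnion]
        have hx1' : (1:ℝ) ≤ 1/x := by rw [le_div_iff₀ hx0]; linarith
        set k := ⌊1/x⌋₊ with hk
        have hk1 : 1 ≤ k := Nat.le_floor (by exact_mod_cast hx1')
        have hk0 : (0:ℝ) < (k:ℝ) := by exact_mod_cast hk1
        refine ⟨k - 1, ?_, ?_⟩
        · have hcast : (((k-1:ℕ)):ℝ) = (k:ℝ) - 1 := by
            push_cast [Nat.cast_sub hk1]; ring
          rw [hcast]
          have h1 : 1/x < (k:ℝ) + 1 := Nat.lt_floor_add_one (1/x)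
          have := one_div_lt_one_div_of_lt (by positivity : (0:ℝ) < 1/x) h1
          rw [one_div_one_div] at this
          calc 1/((k:ℝ) - 1 + 2) = 1/((k:ℝ)+1) := by ring_nf
            _ < x := this
        · have hcast : (((k-1:ℕ)):ℝ) = (k:ℝ) - 1 := by
            push_cast [Nat.cast_sub hk1]; ring
          rw [hcast]
          have h2 : (k:ℝ) ≤ 1/x := Nat.floor_le (by positivity)
          have h3 : x * (k:ℝ) ≤ 1 := by
            calc x * (k:ℝ) ≤ x * (1/x) := by
                  exact mul_le_mul_of_nonneg_left h2 hx0.le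
              _ = 1 := by field_simp
          calc x ≤ 1/(k:ℝ) := by rw [le_div_iff₀ hk0]; linarith
            _ = 1/((k:ℝ) - 1 + 1) := by ring_nf
      · right
        rw [Set.mem_iUnion]
        push_neg at hx1
        set k := ⌈x⌉₊ with hk
        have hk2 : 2 ≤ k := by
          have : 1 < k := Nat.lt_ceil.mpr (by exact_mod_cast hx1)
          omega
        have hcast : (((k-2:ℕ)):ℝ) = (k:ℝ) - 2 := by
          push_cast [Nat.cast_sub hk2]; ring
        refine ⟨k - 2, ?_, ?_⟩
        · rw [hcast]
          have := Nat.ceil_lt_add_one (by linarith : (0:ℝ) ≤ x)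
          linarith
        · rw [hcast]
          have := Nat.le_ceil x
          linarith
    have est : ∀ (a b C : ℝ), 0 < a → a ≤ b → 0 ≤ C →
        (∀ x : ℝ, a < x → (exp (β * x) - 1)⁻¹ ≤ C) →
        ∫⁻ E in Set.Ioc a b, f E ∂m ≤ ENNReal.ofReal (C * N b) := by
      intro a b C ha hab hC0 hC
      calc ∫⁻ E in Set.Ioc a b, f E ∂m
          ≤ ∫⁻ _ in Set.Ioc a b, ENNReal.ofReal C ∂m := by
            apply setLIntegral_mono measurable_const
            intro x hx
            exact ENNReal.ofReal_le_ofReal (hC x hx.1)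
        _ = ENNReal.ofReal C * m (Set.Ioc a b) := setLIntegral_const _ _
        _ = ENNReal.ofReal C * ENNReal.ofReal (N b - N a) := by rw [hm a b hab]
        _ ≤ ENNReal.ofReal C * ENNReal.ofReal (N b) := by
            gcongr
            have := aux_N_nonneg ν hν N hN a ha
            linarith
        _ = ENNReal.ofReal (C * N b) := (ENNReal.ofReal_mul hC0).symm
    set K1 : ℝ := 2 * 14 ^ 7 * ν / (β * (ν * π) ^ 8) with hK1
    set K2 : ℝ := 2 * 14 ^ 7 / (β ^ 8 * π) with hK2
    have hK1' : 0 ≤ K1 := by positivity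
    have hK2' : 0 ≤ K2 := by positivity
    set g1 : ℕ → ℝ := fun n => K1 * (((n:ℝ)+2) / ((n:ℝ)+1) ^ 4) with hg1
    set g2 : ℕ → ℝ := fun n => K2 * (((n:ℝ)+2) / ((n:ℝ)+1) ^ 8) with hg2
    have bound1 : ∀ n : ℕ, ∫⁻ E in S1 n, f E ∂m ≤ ENNReal.ofReal (g1 n) := by
      intro n
      have hn1 : (0:ℝ) < (n:ℝ) + 1 := by positivity
      have hn2 : (0:ℝ) < (n:ℝ) + 2 := by positivity
      have ha : (0:ℝ) < 1/((n:ℝ)+2) := by positivity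
      have hab : 1/((n:ℝ)+2) ≤ 1/((n:ℝ)+1) := by
        apply div_le_div_of_nonneg_left one_pos.le hn1; linarith
      have hC0 : (0:ℝ) ≤ ((n:ℝ)+2)/β := by positivity
      have hC : ∀ x : ℝ, 1/((n:ℝ)+2) < x → (exp (β * x) - 1)⁻¹ ≤ ((n:ℝ)+2)/β := by
        intro x hxa
        have hlb : β / ((n:ℝ)+2) ≤ exp (β * x) - 1 := by
          have h1 : β * (1/((n:ℝ)+2)) ≤ β * x :=
            mul_le_mul_of_nonneg_left hxa.le hβ.le
          have h2 := Real.add_one_le_exp (β * x)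
          calc β / ((n:ℝ)+2) = β * (1/((n:ℝ)+2)) := by ring
            _ ≤ β * x := h1
            _ ≤ exp (β * x) - 1 := by linarith
        have hlb0 : (0:ℝ) < β / ((n:ℝ)+2) := by positivity
        calc (exp (β * x) - 1)⁻¹ ≤ (β / ((n:ℝ)+2))⁻¹ := by
              apply inv_anti₀ hlb0 hlb
          _ = ((n:ℝ)+2)/β := by rw [inv_div]
      refine (est _ _ _ ha hab hC0 hC).trans (ENNReal.ofReal_le_ofReal ?_)
      have hNb : N (1/((n:ℝ)+1)) ≤ ν * (2 * 14 ^ 7) * (1/((n:ℝ)+1)) ^ 4 / (ν * π) ^ 8 :=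
        aux_N_ub1 ν hν N hN _ (by positivity)
      calc ((n:ℝ)+2)/β * N (1/((n:ℝ)+1))
          ≤ ((n:ℝ)+2)/β * (ν * (2 * 14 ^ 7) * (1/((n:ℝ)+1)) ^ 4 / (ν * π) ^ 8) := by
            apply mul_le_mul_of_nonneg_left hNb hC0
        _ = g1 n := by
            rw [hg1, hK1]; field_simp
    have bound2 : ∀ n : ℕ, ∫⁻ E in S2 n, f E ∂m ≤ ENNReal.ofReal (g2 n) := by
      intro n
      have hn1 : (0:ℝ) < (n:ℝ) + 1 := by positivity
      have hn2 : (0:ℝ) < (n:ℝ) + 2 := by positivity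
      have hC0 : (0:ℝ) ≤ 2 * 14 ^ 7 / (β * ((n:ℝ)+1)) ^ 8 := by positivity
      have hC : ∀ x : ℝ, (n:ℝ)+1 < x →
          (exp (β * x) - 1)⁻¹ ≤ 2 * 14 ^ 7 / (β * ((n:ℝ)+1)) ^ 8 := by
        intro x hxa
        have hz : (0:ℝ) ≤ β * ((n:ℝ)+1) := by positivity
        have h1 : (β * ((n:ℝ)+1)) ^ 8 / (2 * 14 ^ 7) ≤ exp (β * ((n:ℝ)+1)) - 1 :=
          aux_exp_sub_one _ hz
        have h2 : exp (β * ((n:ℝ)+1)) ≤ exp (β * x) :=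
          Real.exp_le_exp.mpr (mul_le_mul_of_nonneg_left hxa.le hβ.le)
        have hlb0 : (0:ℝ) < (β * ((n:ℝ)+1)) ^ 8 / (2 * 14 ^ 7) := by positivity
        calc (exp (β * x) - 1)⁻¹ ≤ ((β * ((n:ℝ)+1)) ^ 8 / (2 * 14 ^ 7))⁻¹ := by
              apply inv_anti₀ hlb0 (by linarith)
          _ = 2 * 14 ^ 7 / (β * ((n:ℝ)+1)) ^ 8 := by rw [inv_div]
      refine (est _ _ _ hn1 (by linarith) hC0 hC).trans (ENNReal.ofReal_le_ofReal ?_)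
      have hNb : N ((n:ℝ)+2) ≤ Real.sqrt ((n:ℝ)+2) / π :=
        aux_N_ub2 ν hν N hN _ hn2
      have hsq : Real.sqrt ((n:ℝ)+2) ≤ (n:ℝ)+2 := by
        nlinarith [Real.sq_sqrt hn2.le, Real.sqrt_nonneg ((n:ℝ)+2),
          sq_nonneg (Real.sqrt ((n:ℝ)+2) - 1)]
      calc 2 * 14 ^ 7 / (β * ((n:ℝ)+1)) ^ 8 * N ((n:ℝ)+2)
          ≤ 2 * 14 ^ 7 / (β * ((n:ℝ)+1)) ^ 8 * (((n:ℝ)+2) / π) := by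
            apply mul_le_mul_of_nonneg_left _ hC0
            calc N ((n:ℝ)+2) ≤ Real.sqrt ((n:ℝ)+2) / π := hNb
              _ ≤ ((n:ℝ)+2) / π := (div_le_div_iff_of_pos_right hπ).mpr hsq
        _ = g2 n := by
            rw [hg2, hK2]; field_simp
    have hsum1 : Summable g1 := aux_summable.mul_left K1
    have hsum2 : Summable g2 := by
      refine Summable.of_nonneg_of_le (fun n => by positivity) (fun n => ?_)
        (aux_summable.mul_left K2)
      have hn1 : (0:ℝ) < (n:ℝ) + 1 := by positivity
      apply mul_le_mul_of_nonneg_left _ hK2'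
      apply div_le_div_of_nonneg_left (by linarith) (by positivity)
      exact pow_le_pow_right₀ (by linarith) (by norm_num)
    have h1nn : ∀ n, 0 ≤ g1 n := fun n => by positivity
    have h2nn : ∀ n, 0 ≤ g2 n := fun n => by positivity
    calc ∫⁻ E in Set.Ioi (0:ℝ), f E ∂m
        ≤ ∫⁻ E in (⋃ n : ℕ, S1 n) ∪ (⋃ n : ℕ, S2 n), f E ∂m :=
          lintegral_mono_set cover
      _ ≤ (∫⁻ E in ⋃ n : ℕ, S1 n, f E ∂m) + ∫⁻ E in ⋃ n : ℕ, S2 n, f E ∂m :=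
          lintegral_union_le _ _ _
      _ ≤ (∑' n : ℕ, ∫⁻ E in S1 n, f E ∂m) + ∑' n : ℕ, ∫⁻ E in S2 n, f E ∂m :=
          add_le_add (lintegral_iUnion_le _ _) (lintegral_iUnion_le _ _)
      _ ≤ (∑' n : ℕ, ENNReal.ofReal (g1 n)) + ∑' n : ℕ, ENNReal.ofReal (g2 n) :=
          add_le_add (ENNReal.tsum_le_tsum bound1) (ENNReal.tsum_le_tsum bound2)
      _ < ⊤ := by
          rw [← ENNReal.ofReal_tsum_of_nonneg h1nn hsum1,
            ← ENNReal.ofReal_tsum_of_nonneg h2nn hsum2]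
          exact ENNReal.add_lt_top.mpr ⟨ENNReal.ofReal_lt_top, ENNReal.ofReal_lt_top⟩
  · set g : ℝ → ℝ := fun E =>
      ν * π + (-Real.log ν + Real.log (1 - Real.exp (-(ν * π / Real.sqrt E)))) * Real.sqrt E
      with hg
    have hev : g =ᶠ[nhdsWithin (0:ℝ) (Set.Ioi 0)]
        (fun E : ℝ => -Real.log (N E) * Real.sqrt E) := by
      filter_upwards [self_mem_nhdsWithin] with E hE
      have hE0 : (0:ℝ) < E := hE
      have hs : 0 < Real.sqrt E := Real.sqrt_pos.mpr hE0
      set y := ν * π / Real.sqrt E with hydef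
      have hy : 0 < y := by positivity
      have harg : -ν * π * E ^ (-(1:ℝ)/2) = -y := by
        rw [aux_rpow' E hE0, hydef]; ring
      have h0 : Real.exp (-y) < 1 := Real.exp_lt_one_iff.mpr (by linarith)
      have h1 : (0:ℝ) < 1 - Real.exp (-y) := by linarith
      have h2 : (0:ℝ) < ν * Real.exp (-y) := by positivity
      rw [hg]
      show ν * π + (-Real.log ν + Real.log (1 - Real.exp (-y))) * Real.sqrt E
        = -Real.log (N E) * Real.sqrt E
      rw [hN E hE0, harg,
        Real.log_div (ne_of_gt h2) (ne_of_gt h1),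
        Real.log_mul (ne_of_gt hν) (Real.exp_ne_zero _), Real.log_exp]
      have hy' : y * Real.sqrt E = ν * π := by
        rw [hydef]; field_simp
      linear_combination -hy'
    have hsq0 : Tendsto Real.sqrt (nhdsWithin (0:ℝ) (Set.Ioi 0)) (nhds 0) := by
      have := (Real.continuous_sqrt.tendsto (0:ℝ)).mono_left
        (nhdsWithin_le_nhds (s := Set.Ioi 0))
      simpa using this
    have hsq0' : Tendsto Real.sqrt (nhdsWithin (0:ℝ) (Set.Ioi 0))
        (nhdsWithin (0:ℝ) (Set.Ioi 0)) := by
      rw [tendsto_nhdsWithin_iff]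
      refine ⟨hsq0, ?_⟩
      filter_upwards [self_mem_nhdsWithin] with E hE
      exact Real.sqrt_pos.mpr hE
    have hinv : Tendsto (fun E : ℝ => (Real.sqrt E)⁻¹)
        (nhdsWithin (0:ℝ) (Set.Ioi 0)) atTop := tendsto_inv_nhdsGT_zero.comp hsq0'
    have hyt : Tendsto (fun E : ℝ => ν * π / Real.sqrt E)
        (nhdsWithin (0:ℝ) (Set.Ioi 0)) atTop := by
      have := hinv.const_mul_atTop (by positivity : (0:ℝ) < ν * π)
      simpa [div_eq_mul_inv] using this
    have hexp : Tendsto (fun E : ℝ => Real.exp (-(ν * π / Real.sqrt E)))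
        (nhdsWithin (0:ℝ) (Set.Ioi 0)) (nhds 0) :=
      Real.tendsto_exp_atBot.comp (tendsto_neg_atTop_atBot.comp hyt)
    have hlog : Tendsto (fun E : ℝ => Real.log (1 - Real.exp (-(ν * π / Real.sqrt E))))
        (nhdsWithin (0:ℝ) (Set.Ioi 0)) (nhds 0) := by
      have h1 : Tendsto (fun E : ℝ => 1 - Real.exp (-(ν * π / Real.sqrt E)))
          (nhdsWithin (0:ℝ) (Set.Ioi 0)) (nhds 1) := by
        simpa using tendsto_const_nhds.sub hexp
      have h2 := ((Real.continuousAt_log one_ne_zero).tendsto).comp h1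
      simpa [Function.comp_def] using h2
    have hmain : Tendsto g (nhdsWithin (0:ℝ) (Set.Ioi 0)) (nhds (ν * π)) := by
      have : Tendsto g (nhdsWithin (0:ℝ) (Set.Ioi 0))
          (nhds (ν * π + (-Real.log ν + 0) * 0)) :=
        tendsto_const_nhds.add ((tendsto_const_nhds.add hlog).mul hsq0)
      simpa using this
    exact Filter.Tendsto.congr' hev hmain
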